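/- arXiv:2511.07228 — 2 statements merged into one kernel-verified Lean document; each statement's English description precedes it below -/
import Mathlib

section
/- For all real b₁, b₂ and all integers i, j ≥ 0, Σ_{l=0}^{∞} B(i−l) · D(l, j) equals I₂ if i = j and 0 otherwise, where the sum has only finitely many nonzero terms since B(p) = 0 for |p| ≥ 2. Equivalently, the entrywise product of the block matrix B₁₁ with entries B₁₁(i,j) = B(i−j) and the block matrix with entries D(i,j) is the identity, so B₁₁⁻¹(i,j) = Σ_{m=0}^{min(i,j)} θ(i−m)ᵀθ(j−m). -/
open Matrix

/-- `θ(j) = [[b₁^j, b₁^j], [0, −b₂^j]]` for `j ≥ 0`. -/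
noncomputable def thetaMat (b₁ b₂ : ℝ) : ℕ → Matrix (Fin 2) (Fin 2) ℝ := fun j =>
  !![b₁ ^ j, b₁ ^ j; 0, -b₂ ^ j]

/-- The Fourier coefficients `B(p)` of `(F(λ))⁻¹`. -/
noncomputable def Bmat (b₁ b₂ : ℝ) : ℤ → Matrix (Fin 2) (Fin 2) ℝ := fun p =>
  if p = 0 then !![2 + b₁ ^ 2 + b₂ ^ 2, -1 - b₂ ^ 2; -1 - b₂ ^ 2, 1 + b₂ ^ 2]
  else if p = 1 ∨ p = -1 then !![-b₁ - b₂, b₂; b₂, -b₂]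
  else 0

/-- `D(l, j) = Σ_{m=0}^{min(l,j)} θ(l−m)ᵀ θ(j−m)`, the candidate entries of `B₁₁⁻¹`. -/
noncomputable def Dmat (b₁ b₂ : ℝ) (l j : ℕ) : Matrix (Fin 2) (Fin 2) ℝ :=
  ∑ m ∈ Finset.range (min l j + 1), (thetaMat b₁ b₂ (l - m))ᵀ * thetaMat b₁ b₂ (j - m)

noncomputable def Fgeo (b : ℝ) (l j : ℕ) : ℝ :=
  ∑ m ∈ Finset.range (min l j + 1), b ^ ((l - m) + (j - m))

lemma theta_transpose (b₁ b₂ : ℝ) (a : ℕ) :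
    (thetaMat b₁ b₂ a)ᵀ = !![b₁ ^ a, 0; b₁ ^ a, -b₂ ^ a] := by
  ext p q
  fin_cases p <;> fin_cases q <;> simp [thetaMat, Matrix.transpose_apply]

lemma theta_mul (b₁ b₂ : ℝ) (a b : ℕ) :
    (thetaMat b₁ b₂ a)ᵀ * thetaMat b₁ b₂ b =
      !![b₁ ^ (a + b), b₁ ^ (a + b); b₁ ^ (a + b), b₁ ^ (a + b) + b₂ ^ (a + b)] := by
  rw [theta_transpose]
  ext p q
  fin_cases p <;> fin_cases q <;>
    simp [thetaMat, Matrix.mul_apply, Fin.sum_univ_two, pow_add] <;> ring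

lemma Dmat_eq (b₁ b₂ : ℝ) (l j : ℕ) :
    Dmat b₁ b₂ l j =
      !![Fgeo b₁ l j, Fgeo b₁ l j; Fgeo b₁ l j, Fgeo b₁ l j + Fgeo b₂ l j] := by
  ext p q
  fin_cases p <;> fin_cases q <;>
    simp [Dmat, theta_mul, Matrix.sum_apply, Fgeo, Finset.sum_add_distrib]

lemma Fgeo_succ_of_le (b : ℝ) {l j : ℕ} (h : j ≤ l) :
    Fgeo b (l + 1) j = b * Fgeo b l j := by
  rw [Fgeo, Fgeo, Finset.mul_sum]
  rw [show min (l + 1) j = min l j from by omega]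
  refine Finset.sum_congr rfl fun m hm => ?_
  simp only [Finset.mem_range] at hm
  have hm' : m ≤ j := by omega
  rw [show (l + 1 - m) + (j - m) = ((l - m) + (j - m)) + 1 from by omega, pow_succ]
  ring

lemma Fgeo_succ_of_lt (b : ℝ) {l j : ℕ} (h : l < j) :
    Fgeo b (l + 1) j = b * Fgeo b l j + b ^ (j - (l + 1)) := by
  rw [Fgeo, Fgeo, Finset.mul_sum]
  rw [show min (l + 1) j + 1 = (min l j + 1) + 1 from by omega, Finset.sum_range_succ]
  congr 1
  · refine Finset.sum_congr (by rw [show min l j + 1 = l + 1 from by omega]) fun m hm => ?_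
    simp only [Finset.mem_range] at hm
    rw [show (l + 1 - m) + (j - m) = ((l - m) + (j - m)) + 1 from by omega, pow_succ]
    ring
  · rw [show min l j + 1 = l + 1 from by omega]
    congr 1
    omega

lemma Fgeo_key (b : ℝ) (k j : ℕ) :
    -b * Fgeo b k j + (1 + b ^ 2) * Fgeo b (k + 1) j - b * Fgeo b (k + 2) j
      = if k + 1 = j then 1 else 0 := by
  rcases lt_trichotomy (k + 1) j with h | h | h
  · rw [if_neg (by omega)]
    rw [show k + 2 = (k + 1) + 1 from rfl, Fgeo_succ_of_lt b (by omega : k + 1 < j),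
      Fgeo_succ_of_lt b (by omega : k < j)]
    have hpow : b * b ^ (j - (k + 1 + 1)) = b ^ (j - (k + 1)) := by
      rw [← pow_succ']
      congr 1
      omega
    rw [← hpow]; ring
  · subst h
    rw [if_pos rfl]
    rw [show k + 2 = (k + 1) + 1 from rfl, Fgeo_succ_of_le b (le_refl (k+1)),
      Fgeo_succ_of_lt b (by omega : k < k + 1)]
    simp only [Nat.sub_self, pow_zero]
    ring
  · rw [if_neg (by omega)]
    rw [show k + 2 = (k + 1) + 1 from rfl, Fgeo_succ_of_le b (by omega : j ≤ k + 1),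
      Fgeo_succ_of_le b (by omega : j ≤ k)]
    ring

lemma Fgeo_key0 (b : ℝ) (j : ℕ) :
    (1 + b ^ 2) * Fgeo b 0 j - b * Fgeo b 1 j = if 0 = j then 1 else 0 := by
  rcases Nat.eq_zero_or_pos j with h | h
  · subst h
    simp [Fgeo]
    ring
  · rw [if_neg (by omega), show (1:ℕ) = 0 + 1 from rfl, Fgeo_succ_of_lt b (by omega : 0 < j)]
    have h0 : Fgeo b 0 j = b ^ j := by simp [Fgeo]
    have hpow : b * b ^ (j - (0 + 1)) = b ^ j := by
      rw [← pow_succ']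
      congr 1
      omega
    rw [h0]
    linear_combination (-1 : ℝ) * hpow

lemma Bmat_zero (b₁ b₂ : ℝ) {p : ℤ} (h : 2 ≤ |p|) : Bmat b₁ b₂ p = 0 := by
  rw [Bmat]
  rcases abs_le.mp (le_refl |p|) with ⟨h1, h2⟩
  rcases le_or_gt 0 p with hp | hp
  · rw [abs_of_nonneg hp] at h
    rw [if_neg (by omega), if_neg (by push_neg; omega)]
  · rw [abs_of_neg hp] at h
    rw [if_neg (by omega), if_neg (by push_neg; omega)]


lemma Bmat_at_zero (b₁ b₂ : ℝ) :
    Bmat b₁ b₂ 0 = !![2 + b₁ ^ 2 + b₂ ^ 2, -1 - b₂ ^ 2; -1 - b₂ ^ 2, 1 + b₂ ^ 2] := by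
  simp [Bmat]

lemma Bmat_at_one (b₁ b₂ : ℝ) : Bmat b₁ b₂ 1 = !![-b₁ - b₂, b₂; b₂, -b₂] := by
  norm_num [Bmat]

lemma Bmat_at_neg_one (b₁ b₂ : ℝ) : Bmat b₁ b₂ (-1) = !![-b₁ - b₂, b₂; b₂, -b₂] := by
  norm_num [Bmat]

lemma ite_mat_eq (i j : ℕ) :
    (if i = j then (1 : Matrix (Fin 2) (Fin 2) ℝ) else 0)
      = (if i = j then (1:ℝ) else 0) • (1 : Matrix (Fin 2) (Fin 2) ℝ) := by
  split_ifs <;> simp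

lemma combo0 (b₁ b₂ X0 Y0 X1 Y1 c : ℝ)
    (h1 : (1 + b₁ ^ 2) * X0 - b₁ * X1 = c)
    (h2 : (1 + b₂ ^ 2) * Y0 - b₂ * Y1 = c) :
    Bmat b₁ b₂ 0 * !![X0, X0; X0, X0 + Y0] + Bmat b₁ b₂ (-1) * !![X1, X1; X1, X1 + Y1]
      = c • (1 : Matrix (Fin 2) (Fin 2) ℝ) := by
  rw [Bmat_at_zero, Bmat_at_neg_one]
  ext p q
  fin_cases p <;> fin_cases q <;>
    simp [Matrix.mul_apply, Fin.sum_univ_two, Matrix.one_apply] <;>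
    linarith [h1, h2]

lemma combo1 (b₁ b₂ Xk Yk Xk1 Yk1 Xk2 Yk2 c : ℝ)
    (h1 : -b₁ * Xk + (1 + b₁ ^ 2) * Xk1 - b₁ * Xk2 = c)
    (h2 : -b₂ * Yk + (1 + b₂ ^ 2) * Yk1 - b₂ * Yk2 = c) :
    Bmat b₁ b₂ 1 * !![Xk, Xk; Xk, Xk + Yk] + Bmat b₁ b₂ 0 * !![Xk1, Xk1; Xk1, Xk1 + Yk1]
      + Bmat b₁ b₂ (-1) * !![Xk2, Xk2; Xk2, Xk2 + Yk2]
      = c • (1 : Matrix (Fin 2) (Fin 2) ℝ) := by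
  rw [Bmat_at_zero, Bmat_at_neg_one, Bmat_at_one]
  ext p q
  fin_cases p <;> fin_cases q <;>
    simp [Matrix.mul_apply, Fin.sum_univ_two, Matrix.one_apply] <;>
    linarith [h1, h2]

/-- `Σ_{l≥0} B(i−l)·D(l,j)` equals `I₂` if `i = j` and `0` otherwise; i.e. the block matrix
with entries `D(i,j) = Σ_{m=0}^{min(i,j)} θ(i−m)ᵀθ(j−m)` is the inverse of the block Toeplitz
matrix `B₁₁(i,j) = B(i−j)`. -/
theorem stmt10 (b₁ b₂ : ℝ) (i j : ℕ) :
    HasSum (fun l : ℕ => Bmat b₁ b₂ ((i : ℤ) - (l : ℤ)) * Dmat b₁ b₂ l j)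
      (if i = j then 1 else 0) := by
  have hz : ∀ l ∉ Finset.range (i + 2),
      Bmat b₁ b₂ ((i : ℤ) - (l : ℤ)) * Dmat b₁ b₂ l j = 0 := by
    intro l hl
    simp only [Finset.mem_range, not_lt] at hl
    rw [Bmat_zero b₁ b₂ (by rw [abs_sub_comm, abs_of_nonneg (by omega)]; omega : 2 ≤ |(i:ℤ) - l|),
      Matrix.zero_mul]
  have hmain := hasSum_sum_of_ne_finset_zero (L := SummationFilter.unconditional ℕ) hz
  have hsum : ∑ l ∈ Finset.range (i + 2),
      Bmat b₁ b₂ ((i : ℤ) - (l : ℤ)) * Dmat b₁ b₂ l j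
      = (if i = j then 1 else 0) := by
    rcases i with _ | k
    · rw [Finset.sum_range_succ, Finset.sum_range_succ, Finset.sum_range_zero, zero_add]
      norm_num
      rw [Dmat_eq, Dmat_eq, ite_mat_eq]
      exact combo0 b₁ b₂ _ _ _ _ _ (Fgeo_key0 b₁ j) (Fgeo_key0 b₂ j)
    · rw [show k + 1 + 2 = (k + 2) + 1 from rfl, Finset.sum_range_succ,
        show k + 2 = (k + 1) + 1 from rfl, Finset.sum_range_succ,
        show k + 1 = k + 1 from rfl, Finset.sum_range_succ]
      have hlead : ∑ l ∈ Finset.range k,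
          Bmat b₁ b₂ ((↑(k + 1) : ℤ) - (l : ℤ)) * Dmat b₁ b₂ l j = 0 := by
        refine Finset.sum_eq_zero fun l hl => ?_
        simp only [Finset.mem_range] at hl
        rw [Bmat_zero b₁ b₂ (by rw [abs_of_nonneg (by push_cast; omega)]; push_cast; omega),
          Matrix.zero_mul]
      rw [hlead, zero_add]
      rw [show ((k + 1 : ℕ) : ℤ) - (k : ℤ) = 1 from by push_cast; ring,
        show ((k + 1 : ℕ) : ℤ) - ((k + 1 : ℕ) : ℤ) = 0 from by push_cast; ring,
        show ((k + 1 : ℕ) : ℤ) - ((k + 2 : ℕ) : ℤ) = -1 from by push_cast; ring]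
      rw [Dmat_eq, Dmat_eq, Dmat_eq, ite_mat_eq]
      exact combo1 b₁ b₂ _ _ _ _ _ _ _ (Fgeo_key b₁ k j) (Fgeo_key b₂ k j)
  rwa [hsum] at hmain
end

section
/- Let a(0), a(1) ∈ ℝ² and set a(j) = 0 for j ≥ 2. Define c(j) = D(j,0)a(0) + D(j,1)a(1) for j ≥ 0. Then the vectors c(j) solve the block Toeplitz system: B(0)c(0) + B(−1)c(1) = a(0), and for every j ≥ 1, B(1)c(j−1) + B(0)c(j) + B(−1)c(j+1) = a(j); in particular B(1)c(j−1) + B(0)c(j) + B(−1)c(j+1) = 0 for all j ≥ 2. -/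
open Matrix

lemma D0 (b₁ b₂ : ℝ) (k : ℕ) :
    Dmat b₁ b₂ k 0 = !![b₁ ^ k, b₁ ^ k; b₁ ^ k, b₁ ^ k + b₂ ^ k] := by
  simp [Dmat, thetaMat]
  ext i j
  fin_cases i <;> fin_cases j <;> simp [Matrix.mul_apply, Matrix.transpose_apply, Matrix.vecHead, Matrix.vecTail, Fin.sum_univ_two] <;> ring

lemma D01 (b₁ b₂ : ℝ) :
    Dmat b₁ b₂ 0 1 = !![b₁, b₁; b₁, b₁ + b₂] := by
  simp [Dmat, thetaMat]
  ext i j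
  fin_cases i <;> fin_cases j <;> simp [Matrix.mul_apply, Matrix.transpose_apply, Matrix.vecHead, Matrix.vecTail, Fin.sum_univ_two] <;> ring

lemma D1 (b₁ b₂ : ℝ) (k : ℕ) :
    Dmat b₁ b₂ (k+1) 1 = !![b₁ ^ (k+2) + b₁ ^ k, b₁ ^ (k+2) + b₁ ^ k;
      b₁ ^ (k+2) + b₁ ^ k, b₁ ^ (k+2) + b₂ ^ (k+2) + b₁ ^ k + b₂ ^ k] := by
  have hm : min (k+1) 1 = 1 := by omega
  simp [Dmat, thetaMat, hm, Finset.sum_range_succ]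
  ext i j
  fin_cases i <;> fin_cases j <;> simp [Matrix.mul_apply, Matrix.transpose_apply, Matrix.vecHead, Matrix.vecTail, Fin.sum_univ_two] <;> ring

/-- With `a(0), a(1) ∈ ℝ²`, `a(j) = 0` for `j ≥ 2`, and `c(j) = D(j,0)a(0) + D(j,1)a(1)`,
the vectors `c(j)` solve the block Toeplitz system `B(0)c(0) + B(−1)c(1) = a(0)` and
`B(1)c(j−1) + B(0)c(j) + B(−1)c(j+1) = a(j)` for `j ≥ 1`; in particular this expression
vanishes for `j ≥ 2`. -/
theorem stmt12 (b₁ b₂ : ℝ) (a0 a1 : Fin 2 → ℝ) :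
    let c : ℕ → Fin 2 → ℝ := fun j => Dmat b₁ b₂ j 0 *ᵥ a0 + Dmat b₁ b₂ j 1 *ᵥ a1
    (Bmat b₁ b₂ 0 *ᵥ c 0 + Bmat b₁ b₂ (-1) *ᵥ c 1 = a0) ∧
    (∀ j : ℕ, 1 ≤ j →
      Bmat b₁ b₂ 1 *ᵥ c (j - 1) + Bmat b₁ b₂ 0 *ᵥ c j + Bmat b₁ b₂ (-1) *ᵥ c (j + 1) =
        if j = 1 then a1 else 0) ∧
    (∀ j : ℕ, 2 ≤ j →
      Bmat b₁ b₂ 1 *ᵥ c (j - 1) + Bmat b₁ b₂ 0 *ᵥ c j + Bmat b₁ b₂ (-1) *ᵥ c (j + 1) = 0) := by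
  intro c
  have hB0 : Bmat b₁ b₂ 0 = !![2 + b₁ ^ 2 + b₂ ^ 2, -1 - b₂ ^ 2; -1 - b₂ ^ 2, 1 + b₂ ^ 2] := by
    simp [Bmat]
  have hB1 : Bmat b₁ b₂ 1 = !![-b₁ - b₂, b₂; b₂, -b₂] := by simp [Bmat]
  have hBm1 : Bmat b₁ b₂ (-1) = !![-b₁ - b₂, b₂; b₂, -b₂] := by simp [Bmat]
  have h2 : ∀ j : ℕ, 1 ≤ j →
      Bmat b₁ b₂ 1 *ᵥ c (j - 1) + Bmat b₁ b₂ 0 *ᵥ c j + Bmat b₁ b₂ (-1) *ᵥ c (j + 1) =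
        if j = 1 then a1 else 0 := by
    intro j hj
    match j, hj with
    | 1, _ =>
      have hD11 := D1 b₁ b₂ 0
      have hD21 := D1 b₁ b₂ 1
      norm_num at hD11 hD21
      simp only [c, show (1:ℕ)-1 = 0 from rfl, if_pos rfl, hB0, hB1, hBm1, D0, D01,
        hD11, hD21]
      funext i
      fin_cases i <;>
        simp [Matrix.mulVec, dotProduct, Fin.sum_univ_two, Matrix.add_apply] <;> ring
    | (k+2), _ =>
      simp only [c, show k+2-1 = k+1 from rfl, if_neg (by omega : ¬ k+2 = 1), hB0, hB1, hBm1,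
        D0, show k+2 = (k+1)+1 from rfl, show k+2+1 = (k+2)+1 from rfl, D1]
      funext i
      fin_cases i <;>
        simp [Matrix.mulVec, dotProduct, Fin.sum_univ_two, Matrix.add_apply] <;> ring
  refine ⟨?_, h2, fun j hj => by rw [h2 j (by omega), if_neg (by omega)]⟩
  have hD11 := D1 b₁ b₂ 0
  norm_num at hD11
  simp only [c, hB0, hBm1, D0, D01, hD11]
  funext i
  fin_cases i <;>
    simp [Matrix.mulVec, dotProduct, Fin.sum_univ_two, Matrix.add_apply] <;> ring
end
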